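/- arXiv:1510.07473 — 8 statements merged into one kernel-verified Lean document; each statement's English description precedes it below -/
import Mathlib

section
/- If μ* is an upper quasi-density on ℕ, then μ*(X) = 0 for every finite subset X of ℕ. -/
/-- `k·X + h = {k*x + h : x ∈ X}` -/
def affImage (k h : ℕ) (X : Set ℕ) : Set ℕ := (fun x => k * x + h) '' X

theorem stmt3 (μ : Set ℕ → ℝ)
    (h1 : μ Set.univ = 1)
    (h2 : ∀ X : Set ℕ, μ X ≤ 1)
    (h3 : ∀ X Y : Set ℕ, μ (X ∪ Y) ≤ μ X + μ Y)
    (h4 : ∀ (X : Set ℕ) (h k : ℕ), 0 < h → 0 < k →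
      μ (affImage k h X) = (1 / (k : ℝ)) * μ X) :
    ∀ X : Set ℕ, X.Finite → μ X = 0 := by
  -- lower bound: μ X ≥ 0 for all X
  have hnn : ∀ X : Set ℕ, 0 ≤ μ X := by
    intro X
    have := h3 X Xᶜ
    rw [Set.union_compl_self, h1] at this
    have := h2 Xᶜ
    linarith [h3 X Xᶜ]
  -- μ ∅ = 0
  have hemp : μ ∅ = 0 := by
    have h := h4 ∅ 1 2 one_pos two_pos
    have : affImage 2 1 (∅ : Set ℕ) = ∅ := by simp [affImage]
    rw [this] at h
    norm_num at h
    linarith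
  -- singleton image
  have haff : ∀ k h : ℕ, 0 < h → 0 < k → affImage k h {0} = {h} := by
    intro k h _ _; simp [affImage]
  have h0 : μ {0} = 0 := by
    have e1 := h4 {0} 1 1 one_pos one_pos
    have e2 := h4 {0} 1 2 one_pos two_pos
    rw [haff 1 1 one_pos one_pos] at e1
    rw [haff 2 1 one_pos two_pos] at e2
    rw [e1] at e2
    norm_num at e2
    linarith
  have hsing : ∀ n : ℕ, μ {n} = 0 := by
    intro n
    rcases Nat.eq_zero_or_pos n with rfl | hn
    · exact h0
    · have e := h4 {0} n 1 hn one_pos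
      rw [haff 1 n hn one_pos, h0] at e
      simpa using e
  have hub : ∀ X : Set ℕ, X.Finite → μ X ≤ 0 := by
    intro X hX
    refine Set.Finite.induction_on (motive := fun X _ => μ X ≤ 0) X hX (by simp [hemp]) ?_
    intro a s _ _ ih
    have h := h3 {a} s
    rw [Set.singleton_union] at h
    calc μ (insert a s) ≤ μ {a} + μ s := h
    _ ≤ 0 := by rw [hsing]; linarith
  intro X hX
  exact le_antisymm (hub X hX) (hnn X)
end

section
/- Let μ* be an upper quasi-density on ℕ, let k be a positive integer, and let h₁, …, hₙ be nonnegative integers that are pairwise incongruent modulo k. Set ℋ := {h₁, …, hₙ} and V := ⋃_{h ∈ ℋ} (k·ℕ + h). Then μ*(V ∪ F) = n/k for every finite subset F of ℕ. -/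
lemma mem_aff {k h m : ℕ} (hk : 0 < k) :
    m ∈ affImage k h Set.univ ↔ h ≤ m ∧ m % k = h % k := by
  constructor
  · rintro ⟨x, -, rfl⟩
    exact ⟨Nat.le_add_left _ _, Nat.mul_add_mod k x h⟩
  · rintro ⟨hle, hmod⟩
    obtain ⟨c, hc⟩ := (Nat.modEq_iff_dvd' hle).mp hmod.symm
    exact ⟨c, trivial, by simp only []; omega⟩

lemma aff_insert (k h : ℕ) :
    affImage k h Set.univ = insert h (affImage k (h + k) Set.univ) := by
  ext m
  simp only [affImage, Set.image_univ, Set.mem_range, Set.mem_insert_iff]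
  constructor
  · rintro ⟨x, rfl⟩
    cases x with
    | zero => left; simp
    | succ y => right; exact ⟨y, by ring⟩
  · rintro (rfl | ⟨y, rfl⟩)
    · exact ⟨0, by simp⟩
    · exact ⟨y + 1, by ring⟩

lemma mu_nonneg (μ : Set ℕ → ℝ) (h1 : μ Set.univ = 1) (h2 : ∀ X : Set ℕ, μ X ≤ 1)
    (h3 : ∀ X Y : Set ℕ, μ (X ∪ Y) ≤ μ X + μ Y) (X : Set ℕ) : 0 ≤ μ X := by
  have hu := h3 X Xᶜ
  rw [Set.union_compl_self, h1] at hu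
  have := h2 Xᶜ
  linarith

lemma mu_singleton (μ : Set ℕ → ℝ)
    (h4 : ∀ (X : Set ℕ) (h k : ℕ), 0 < h → 0 < k →
      μ (affImage k h X) = (1 / (k : ℝ)) * μ X) (a : ℕ) : μ {a} = 0 := by
  have h0 : μ {0} = 0 := by
    have e1 : affImage 2 1 ({0} : Set ℕ) = {1} := by simp [affImage]
    have e2 : affImage 1 1 ({0} : Set ℕ) = {1} := by simp [affImage]
    have t2 := h4 {0} 1 2 one_pos two_pos
    have t1 := h4 {0} 1 1 one_pos one_pos
    rw [e1] at t2; rw [e2] at t1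
    norm_num at t1 t2
    linarith
  rcases Nat.eq_zero_or_pos a with rfl | ha
  · exact h0
  · have e : affImage 1 a ({0} : Set ℕ) = {a} := by simp [affImage]
    have t := h4 {0} a 1 ha one_pos
    rw [e] at t; norm_num at t; rw [t, h0]

lemma mu_empty (μ : Set ℕ → ℝ) (h1 : μ Set.univ = 1) (h2 : ∀ X : Set ℕ, μ X ≤ 1)
    (h3 : ∀ X Y : Set ℕ, μ (X ∪ Y) ≤ μ X + μ Y)
    (h4 : ∀ (X : Set ℕ) (h k : ℕ), 0 < h → 0 < k →
      μ (affImage k h X) = (1 / (k : ℝ)) * μ X) : μ ∅ = 0 := by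
  have e : affImage 2 1 (∅ : Set ℕ) = ∅ := by simp [affImage]
  have t := h4 ∅ 1 2 one_pos two_pos
  rw [e] at t
  have := mu_nonneg μ h1 h2 h3 ∅
  norm_num at t
  linarith

lemma mu_finite (μ : Set ℕ → ℝ) (h1 : μ Set.univ = 1) (h2 : ∀ X : Set ℕ, μ X ≤ 1)
    (h3 : ∀ X Y : Set ℕ, μ (X ∪ Y) ≤ μ X + μ Y)
    (h4 : ∀ (X : Set ℕ) (h k : ℕ), 0 < h → 0 < k →
      μ (affImage k h X) = (1 / (k : ℝ)) * μ X)
    {F : Set ℕ} (hF : F.Finite) : μ F = 0 := by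
  have hle : μ F ≤ 0 := by
    refine Set.Finite.induction_on (motive := fun s _ => μ s ≤ 0) F hF (le_of_eq (mu_empty μ h1 h2 h3 h4)) ?_
    intro a s _ _ ih
    have hsub : μ (insert a s) ≤ μ {a} + μ s := by
      rw [Set.insert_eq]; exact h3 _ _
    have hsing := mu_singleton μ h4 a
    linarith
  exact le_antisymm hle (mu_nonneg μ h1 h2 h3 F)

lemma mu_biUnion (μ : Set ℕ → ℝ) (h3 : ∀ X Y : Set ℕ, μ (X ∪ Y) ≤ μ X + μ Y)
    (hemp : μ ∅ = 0) {ι : Type*} [DecidableEq ι] (s : Finset ι) (f : ι → Set ℕ) :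
    μ (⋃ i ∈ s, f i) ≤ ∑ i ∈ s, μ (f i) := by
  induction s using Finset.induction_on with
  | empty => simp [hemp]
  | @insert a s ha ih =>
      rw [Finset.set_biUnion_insert, Finset.sum_insert ha]
      exact le_trans (h3 _ _) (by linarith)

theorem stmt6 (μ : Set ℕ → ℝ)
    (h1 : μ Set.univ = 1)
    (h2 : ∀ X : Set ℕ, μ X ≤ 1)
    (h3 : ∀ X Y : Set ℕ, μ (X ∪ Y) ≤ μ X + μ Y)
    (h4 : ∀ (X : Set ℕ) (h k : ℕ), 0 < h → 0 < k →
      μ (affImage k h X) = (1 / (k : ℝ)) * μ X)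
    (k : ℕ) (hk : 0 < k) (n : ℕ) (h : Fin n → ℕ)
    (hinc : ∀ i j : Fin n, i ≠ j → h i % k ≠ h j % k) :
    ∀ F : Set ℕ, F.Finite →
      μ ((⋃ i : Fin n, affImage k (h i) Set.univ) ∪ F) = (n : ℝ) / k := by
  classical
  intro F hF
  have hemp : μ ∅ = 0 := mu_empty μ h1 h2 h3 h4
  have hfin : ∀ {G : Set ℕ}, G.Finite → μ G = 0 := fun hG => mu_finite μ h1 h2 h3 h4 hG
  have hk' : (0 : ℝ) < k := by exact_mod_cast hk
  have hclass : ∀ h' : ℕ, 0 < h' → μ (affImage k h' Set.univ) = 1 / k := by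
    intro h' hh'
    rw [h4 Set.univ h' k hh' hk, h1, mul_one]
  -- rewrite the union using positive offsets
  have hins : ∀ i : Fin n, affImage k (h i) Set.univ
      = insert (h i) (affImage k (h i + k) Set.univ) := fun i => aff_insert k (h i)
  have hV : (⋃ i : Fin n, affImage k (h i) Set.univ) ∪ F
      = (⋃ i : Fin n, affImage k (h i + k) Set.univ) ∪ (Set.range h ∪ F) := by
    ext m
    simp only [Set.mem_union, Set.mem_iUnion, hins, Set.mem_insert_iff, Set.mem_range]
    constructor
    · rintro (⟨i, (rfl | hm)⟩ | hm)
      · exact Or.inr (Or.inl ⟨i, rfl⟩)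
      · exact Or.inl ⟨i, hm⟩
      · exact Or.inr (Or.inr hm)
    · rintro (⟨i, hm⟩ | ⟨i, rfl⟩ | hm)
      · exact Or.inl ⟨i, Or.inr hm⟩
      · exact Or.inl ⟨i, Or.inl rfl⟩
      · exact Or.inr hm
  -- upper bound
  have hV'le : μ (⋃ i : Fin n, affImage k (h i + k) Set.univ) ≤ (n : ℝ) / k := by
    have e : (⋃ i : Fin n, affImage k (h i + k) Set.univ)
        = ⋃ i ∈ (Finset.univ : Finset (Fin n)), affImage k (h i + k) Set.univ := by
      simp
    rw [e]
    refine le_trans (mu_biUnion μ h3 hemp _ _) ?_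
    have : ∀ i ∈ (Finset.univ : Finset (Fin n)),
        μ (affImage k (h i + k) Set.univ) = 1 / (k : ℝ) := by
      intro i _; exact hclass _ (by omega)
    rw [Finset.sum_congr rfl this, Finset.sum_const, Finset.card_univ, Fintype.card_fin,
      nsmul_eq_mul]
    apply le_of_eq; ring
  have hF' : (Set.range h ∪ F).Finite := (Set.finite_range h).union hF
  have up : μ ((⋃ i : Fin n, affImage k (h i) Set.univ) ∪ F) ≤ (n : ℝ) / k := by
    rw [hV]
    refine le_trans (h3 _ _) ?_
    rw [hfin hF']
    linarith
  -- lower bound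
  set R : Finset ℕ := Finset.image (fun i => h i % k) Finset.univ with hR
  set S : Finset ℕ := Finset.range k \ R with hS
  have hinj : Function.Injective (fun i : Fin n => h i % k) := by
    intro i j hij
    by_contra hne
    exact hinc i j hne hij
  have hRcard : R.card = n := by
    rw [hR, Finset.card_image_of_injective _ hinj, Finset.card_univ, Fintype.card_fin]
  have hRsub : R ⊆ Finset.range k := by
    intro r hr
    simp only [hR, Finset.mem_image, Finset.mem_univ, true_and] at hr
    obtain ⟨i, rfl⟩ := hr
    exact Finset.mem_range.mpr (Nat.mod_lt _ hk)
  have hScard : S.card = k - n := by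
    rw [hS, Finset.card_sdiff_of_subset hRsub, Finset.card_range, hRcard]
  have hnk : n ≤ k := by
    have := Finset.card_le_card hRsub
    rw [hRcard, Finset.card_range] at this
    exact this
  set B : ℕ := 2 * k + ∑ i, h i with hB
  set W : Set ℕ := ⋃ r ∈ S, affImage k (r + k) Set.univ with hWdef
  have cover : ((⋃ i : Fin n, affImage k (h i) Set.univ) ∪ F) ∪ (W ∪ Set.Iio B)
      = Set.univ := by
    apply Set.eq_univ_of_forall
    intro m
    by_cases hm : m < B
    · exact Or.inr (Or.inr hm)
    · push_neg at hm
      have hmk := Nat.mod_lt m hk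
      by_cases hr : (m % k) ∈ R
      · simp only [hR, Finset.mem_image, Finset.mem_univ, true_and] at hr
        obtain ⟨i, hi⟩ := hr
        have hhi : h i ≤ ∑ j, h j :=
          Finset.single_le_sum (fun j _ => Nat.zero_le (h j)) (Finset.mem_univ i)
        refine Or.inl (Or.inl (Set.mem_iUnion.mpr ⟨i, (mem_aff hk).mpr ⟨by omega, hi.symm⟩⟩))
      · have hrk : m % k ∈ S :=
          Finset.mem_sdiff.mpr ⟨Finset.mem_range.mpr hmk, hr⟩
        refine Or.inr (Or.inl (Set.mem_biUnion hrk ((mem_aff hk).mpr ⟨by omega, ?_⟩)))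
        rw [Nat.add_mod_right]
        exact (Nat.mod_mod_of_dvd m dvd_rfl).symm
  have hW : μ W ≤ ((k : ℝ) - n) / k := by
    rw [hWdef]
    refine le_trans (mu_biUnion μ h3 hemp _ _) ?_
    have : ∀ r ∈ S, μ (affImage k (r + k) Set.univ) = 1 / (k : ℝ) := by
      intro r _; exact hclass _ (by omega)
    rw [Finset.sum_congr rfl this, Finset.sum_const, hScard, nsmul_eq_mul,
      Nat.cast_sub hnk]
    apply le_of_eq; ring
  have hG : μ (Set.Iio B) = 0 := hfin (Set.finite_Iio B)
  have low1 := h3 ((⋃ i : Fin n, affImage k (h i) Set.univ) ∪ F) (W ∪ Set.Iio B)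
  rw [cover, h1] at low1
  have low2 := h3 W (Set.Iio B)
  rw [hG] at low2
  have key : ((n : ℝ)) / k = 1 - ((k : ℝ) - n) / k := by field_simp; ring
  linarith
end

section
/- Let μ* be an upper quasi-density on ℕ and X ⊆ ℕ a set contained (up to finitely many elements) in an arithmetic progression k·ℕ + h with k ≥ 1 and h ≥ 0. Then μ*(X) ≤ 1/k. -/
theorem stmt9 (μ : Set ℕ → ℝ)
    (h1 : μ Set.univ = 1)
    (h2 : ∀ X : Set ℕ, μ X ≤ 1)
    (h3 : ∀ X Y : Set ℕ, μ (X ∪ Y) ≤ μ X + μ Y)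
    (h4 : ∀ (X : Set ℕ) (h k : ℕ), 0 < h → 0 < k →
      μ (affImage k h X) = (1 / (k : ℝ)) * μ X)
    (X : Set ℕ) (k h : ℕ) (hk : 1 ≤ k)
    (hfin : (X \ affImage k h Set.univ).Finite) :
    μ X ≤ 1 / (k : ℝ) := by
  have kpos : 0 < k := hk
  -- μ of singletons is 0
  have hzero : μ {0} = 0 := by
    have e1 : affImage 1 1 {0} = {1} := by simp [affImage]
    have e2 : affImage 2 1 {0} = {1} := by simp [affImage]
    have a1 := h4 {0} 1 1 one_pos one_pos
    have a2 := h4 {0} 1 2 one_pos two_pos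
    rw [e1] at a1; rw [e2] at a2
    norm_num at a1 a2
    linarith
  have hsingle : ∀ a : ℕ, μ {a} = 0 := by
    intro a
    rcases Nat.eq_zero_or_pos a with rfl | ha
    · exact hzero
    · have e : affImage 1 a {0} = {a} := by simp [affImage]
      have := h4 {0} a 1 ha one_pos
      rw [e] at this
      norm_num at this
      rw [this, hzero]
  have hempty : μ ∅ = 0 := by
    have e : affImage 2 1 (∅ : Set ℕ) = ∅ := by simp [affImage]
    have := h4 ∅ 1 2 one_pos two_pos
    rw [e] at this
    norm_num at this
    linarith
  -- μ of finite sets is ≤ 0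
  have hfinle : ∀ F : Set ℕ, F.Finite → μ F ≤ 0 := by
    intro F hF
    refine Set.Finite.induction_on (motive := fun s _ => μ s ≤ 0) F hF (le_of_eq hempty) ?_
    intro a s ha hs ih
    have : μ (insert a s) ≤ μ {a} + μ s := by
      rw [← Set.singleton_union]; exact h3 _ _
    rw [hsingle a] at this
    linarith
  -- replace h by a positive h'
  set h' : ℕ := if h = 0 then k else h with hh'
  have hpos : 0 < h' := by
    rw [hh']; split
    · exact kpos
    · omega
  have hfin' : (X \ affImage k h' Set.univ).Finite := by
    rcases eq_or_ne h 0 with rfl | hne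
    · have hk0 : h' = k := by simp [hh']
      rw [hk0]
      apply Set.Finite.subset (hfin.union (Set.finite_singleton 0))
      intro x hx
      rcases hx with ⟨hxX, hxA⟩
      by_cases hx0 : x = 0
      · exact Or.inr (by simp [hx0])
      · left
        refine ⟨hxX, fun hmem => hxA ?_⟩
        obtain ⟨y, -, hy⟩ := hmem
        simp only at hy
        have hy1 : 1 ≤ y := by
          rcases Nat.eq_zero_or_pos y with rfl | h1
          · exfalso; apply hx0; omega
          · exact h1
        obtain ⟨z, rfl⟩ : ∃ z, y = z + 1 := ⟨y - 1, by omega⟩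
        rw [Nat.mul_succ] at hy
        exact ⟨z, Set.mem_univ _, by simp only; omega⟩
    · simpa [hh', if_neg hne] using hfin
  set A : Set ℕ := affImage k h' Set.univ with hA
  set Y : Set ℕ := (fun x => k * x + h') ⁻¹' X with hY
  have hXA : X ∩ A = affImage k h' Y := by
    ext x
    constructor
    · rintro ⟨hxX, y, -, hy⟩
      exact ⟨y, by simpa [hY, hy] using hxX, hy⟩
    · rintro ⟨y, hyY, hy⟩
      exact ⟨by simpa [hY, hy] using hyY, y, Set.mem_univ _, hy⟩
  have hmu1 : μ (X ∩ A) = (1 / (k : ℝ)) * μ Y := by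
    rw [hXA]; exact h4 Y h' k hpos kpos
  have hsplit : μ X ≤ μ (X ∩ A) + μ (X \ A) := by
    have : X ∩ A ∪ X \ A = X := Set.inter_union_diff X A
    calc μ X = μ (X ∩ A ∪ X \ A) := by rw [this]
    _ ≤ _ := h3 _ _
  have hkpos : (0 : ℝ) < (k : ℝ) := by exact_mod_cast kpos
  have h1k : (0 : ℝ) < 1 / (k : ℝ) := by positivity
  have hYle : μ Y ≤ 1 := h2 Y
  have hdiff : μ (X \ A) ≤ 0 := hfinle _ hfin'
  calc μ X ≤ μ (X ∩ A) + μ (X \ A) := hsplit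
  _ ≤ (1 / (k : ℝ)) * μ Y + 0 := by rw [hmu1]; linarith
  _ ≤ 1 / (k : ℝ) := by nlinarith
end

section
/- Let f : 𝒫(S) → ℝ be a function with the weak Darboux property (for every X ⊆ S and every a ∈ [f(∅), f(X)] there exists A ⊆ X with f(A) = a). Then f(X) ≤ f(∅) for every finite X ⊆ S. -/
theorem stmt11 {S : Type*} (f : Set S → ℝ)
    (hD : ∀ X : Set S, ∀ a : ℝ, f ∅ ≤ a → a ≤ f X →
      ∃ A : Set S, A ⊆ X ∧ f A = a) :
    ∀ X : Set S, X.Finite → f X ≤ f ∅ := by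
  intro X hX
  by_contra h
  push_neg at h
  have hfin : (f '' {A | A ⊆ X}).Finite := hX.finite_subsets.image f
  have hsub : Set.Icc (f ∅) (f X) ⊆ f '' {A | A ⊆ X} := by
    intro a ha
    obtain ⟨A, hA, hfa⟩ := hD X a ha.1 ha.2
    exact ⟨A, hA, hfa⟩
  exact Set.Icc_infinite h (hfin.subset hsub)
end

section
/- Let μ* be an upper quasi-density on ℕ, let A ⊆ B ⊆ ℕ with μ*(A) < μ*(B), and let a, b be reals with μ*(A) ≤ a < b ≤ μ*(B). Then for every integer k > 1/(b − a) there exist a set ℋ₀ ⊆ {0, 1, …, k−1} and an element h₀ ∈ {0, 1, …, k−1} such that a < μ*(A ∪ (B ∩ V_{k,ℋ₀})) < b ≤ μ*(A ∪ (B ∩ V_{k, ℋ₀ ∪ {h₀}})), where V_{k,ℋ} := ⋃_{h ∈ ℋ}(k·ℕ + h). -/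
theorem stmt12 (μ : Set ℕ → ℝ)
    (h1 : μ Set.univ = 1)
    (h2 : ∀ X : Set ℕ, μ X ≤ 1)
    (h3 : ∀ X Y : Set ℕ, μ (X ∪ Y) ≤ μ X + μ Y)
    (h4 : ∀ (X : Set ℕ) (h k : ℕ), 0 < h → 0 < k →
      μ (affImage k h X) = (1 / (k : ℝ)) * μ X)
    (A B : Set ℕ) (hAB : A ⊆ B) (hlt : μ A < μ B)
    (a b : ℝ) (ha : μ A ≤ a) (hab : a < b) (hb : b ≤ μ B) :
    ∀ k : ℕ, (1 / (b - a) : ℝ) < k →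
      ∃ H0 ⊆ Set.Iio k, ∃ h0 ∈ Set.Iio k,
        a < μ (A ∪ (B ∩ ⋃ h ∈ H0, affImage k h Set.univ)) ∧
        μ (A ∪ (B ∩ ⋃ h ∈ H0, affImage k h Set.univ)) < b ∧
        b ≤ μ (A ∪ (B ∩ ⋃ h ∈ (H0 ∪ {h0}), affImage k h Set.univ)) := by
  intro k hk
  have hba : (0:ℝ) < b - a := sub_pos.mpr hab
  have hk0 : 0 < k := by
    rcases Nat.eq_zero_or_pos k with h | h
    · exfalso; rw [h] at hk; push_cast at hk
      have := div_pos one_pos hba; linarith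
    · exact h
  have hkR : (0:ℝ) < (k:ℝ) := by exact_mod_cast hk0
  have hkinv : (1:ℝ) / k < b - a := by
    rw [div_lt_iff₀ hba] at hk
    rw [div_lt_iff₀ hkR]
    nlinarith
  -- μ ∅ = 0
  have hempty : μ ∅ = 0 := by
    have e : affImage 2 1 (∅ : Set ℕ) = ∅ := by simp [affImage]
    have := h4 ∅ 1 2 one_pos two_pos
    rw [e] at this
    norm_num at this
    linarith
  -- μ {0} = 0
  have hzero : μ {0} = 0 := by
    have e1 : affImage 1 1 ({0} : Set ℕ) = {1} := by simp [affImage]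
    have e2 : affImage 2 1 ({0} : Set ℕ) = {1} := by simp [affImage]
    have t1 := h4 {0} 1 1 one_pos one_pos
    have t2 := h4 {0} 1 2 one_pos two_pos
    rw [e1] at t1; rw [e2] at t2
    norm_num at t1 t2
    linarith
  -- any subset of an arithmetic progression with positive shift has μ ≤ 1/k
  have hbound' : ∀ (X : Set ℕ) (h : ℕ), 0 < h → X ⊆ affImage k h Set.univ →
      μ X ≤ 1 / k := by
    intro X h hh hXsub
    have hrange : affImage k h Set.univ = Set.range (fun x => k * x + h) := by
      simp [affImage, Set.image_univ]
    have himg : affImage k h ((fun x => k * x + h) ⁻¹' X) = X := by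
      unfold affImage
      rw [Set.image_preimage_eq_inter_range, Set.inter_eq_left]
      rw [hrange] at hXsub; exact hXsub
    have := h4 ((fun x => k * x + h) ⁻¹' X) h k hh hk0
    rw [himg] at this
    rw [this]
    have := h2 ((fun x => k * x + h) ⁻¹' X)
    have hpos : (0:ℝ) ≤ 1 / k := by positivity
    calc 1 / (k:ℝ) * μ ((fun x => k * x + h) ⁻¹' X) ≤ 1 / k * 1 := by
          apply mul_le_mul_of_nonneg_left this hpos
      _ = 1 / k := mul_one _
  -- key bound: μ (X ∩ V h) ≤ 1/k for any h
  have key : ∀ (X : Set ℕ) (h : ℕ), μ (X ∩ affImage k h Set.univ) ≤ 1 / k := by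
    intro X h
    rcases Nat.eq_zero_or_pos h with rfl | hh
    · -- h = 0 : split off 0
      have hsplit : X ∩ affImage k 0 Set.univ
          = ((X ∩ affImage k 0 Set.univ) ∩ {0}) ∪ ((X ∩ affImage k 0 Set.univ) \ {0}) := by
        simp [Set.inter_union_diff]
      have hsub : (X ∩ affImage k 0 Set.univ) \ {0} ⊆ affImage k k Set.univ := by
        rintro n ⟨⟨-, m, -, rfl⟩, hn0⟩
        simp only [Set.mem_singleton_iff, add_zero] at hn0
        obtain ⟨m', rfl⟩ : ∃ m', m = m' + 1 := by
          rcases m with _ | m'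
          · exact absurd (by simp) hn0
          · exact ⟨m', rfl⟩
        exact ⟨m', Set.mem_univ _, by ring⟩
      have h1' : μ ((X ∩ affImage k 0 Set.univ) \ {0}) ≤ 1 / k :=
        hbound' _ k hk0 hsub
      have h2' : μ ((X ∩ affImage k 0 Set.univ) ∩ {0}) = 0 := by
        rcases Set.subset_singleton_iff_eq.mp
            (Set.inter_subset_right (s := X ∩ affImage k 0 Set.univ) (t := {0})) with h | h
        · rw [h]; exact hempty
        · rw [h]; exact hzero
      calc μ (X ∩ affImage k 0 Set.univ)
          ≤ μ ((X ∩ affImage k 0 Set.univ) ∩ {0})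
            + μ ((X ∩ affImage k 0 Set.univ) \ {0}) := by
            nth_rewrite 1 [hsplit]; exact h3 _ _
        _ ≤ 1 / k := by rw [h2']; linarith
    · exact hbound' _ h hh Set.inter_subset_right
  set g : ℕ → ℝ := fun j => μ (A ∪ (B ∩ ⋃ h ∈ Set.Iio j, affImage k h Set.univ)) with hg
  have g0 : g 0 = μ A := by
    have : (Set.Iio (0:ℕ)) = ∅ := by ext x; simp
    simp [hg, this]
  have gk : g k = μ B := by
    have hcov : (⋃ h ∈ Set.Iio k, affImage k h Set.univ) = Set.univ := by
      ext n
      simp only [Set.mem_iUnion, Set.mem_Iio, Set.mem_univ, iff_true, affImage,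
        Set.image_univ, Set.mem_range]
      exact ⟨n % k, Nat.mod_lt n hk0, n / k, (Nat.div_add_mod n k)⟩
    show μ (A ∪ (B ∩ ⋃ h ∈ Set.Iio k, affImage k h Set.univ)) = μ B
    rw [hcov, Set.inter_univ, Set.union_eq_right.mpr hAB]
  have gstep : ∀ m, g (m + 1) ≤ g m + 1 / k := by
    intro m
    have hsplit : A ∪ (B ∩ ⋃ h ∈ Set.Iio (m+1), affImage k h Set.univ)
        = (A ∪ (B ∩ ⋃ h ∈ Set.Iio m, affImage k h Set.univ))
          ∪ (B ∩ affImage k m Set.univ) := by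
      ext n
      simp only [Set.mem_union, Set.mem_inter_iff, Set.mem_iUnion, Set.mem_Iio]
      constructor
      · rintro (h | ⟨hB, i, hi, hin⟩)
        · exact Or.inl (Or.inl h)
        · rcases Nat.lt_or_ge i m with h' | h'
          · exact Or.inl (Or.inr ⟨hB, i, h', hin⟩)
          · have : i = m := by omega
            exact Or.inr ⟨hB, this ▸ hin⟩
      · rintro ((h | ⟨hB, i, hi, hin⟩) | ⟨hB, hin⟩)
        · exact Or.inl h
        · exact Or.inr ⟨hB, i, by omega, hin⟩
        · exact Or.inr ⟨hB, m, by omega, hin⟩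
    calc g (m+1) = μ _ := by rw [hg]
      _ ≤ μ (A ∪ (B ∩ ⋃ h ∈ Set.Iio m, affImage k h Set.univ))
          + μ (B ∩ affImage k m Set.univ) := by rw [hsplit]; exact h3 _ _
      _ ≤ g m + 1 / k := add_le_add le_rfl (key B m)
  have hPk : b ≤ g k := gk ▸ hb
  obtain ⟨j, hjspec, hjmin⟩ : ∃ j, b ≤ g j ∧ ∀ i < j, ¬ b ≤ g i := by
    classical
    have hex : ∃ j, b ≤ g j := ⟨k, hPk⟩
    exact ⟨Nat.find hex, Nat.find_spec hex, fun i hi => Nat.find_min hex hi⟩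
  have hjk : j ≤ k := by
    by_contra hc
    push_neg at hc
    exact hjmin k hc hPk
  have hj0 : j ≠ 0 := by
    rintro rfl
    rw [g0] at hjspec
    linarith
  obtain ⟨m, rfl⟩ : ∃ m, j = m + 1 := ⟨j - 1, by omega⟩
  have hgm_lt : g m < b := not_le.mp (hjmin m (Nat.lt_succ_self m))
  have hgm_gt : a < g m := by
    have := gstep m
    linarith
  have hmk : m < k := by omega
  refine ⟨Set.Iio m, fun x hx => lt_trans hx hmk, m, hmk, ?_, ?_, ?_⟩
  · exact hgm_gt
  · exact hgm_lt
  · have hIio : (Set.Iio m ∪ {m} : Set ℕ) = Set.Iio (m + 1) := by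
      ext x; simp only [Set.mem_union, Set.mem_Iio, Set.mem_singleton_iff]; omega
    rw [hIio]
    exact hjspec
end

section
/- Every upper quasi-density on ℕ has the strong Darboux property: if μ* is an upper quasi-density, X ⊆ Y ⊆ ℕ, and a is a real number with μ*(X) ≤ a ≤ μ*(Y), then there exists a set A with X ⊆ A ⊆ Y and μ*(A) = a. -/
noncomputable def vv : ℕ → ℝ
  | 0 => 0
  | (n+1) => (((n+1) % 2 : ℕ) + vv ((n+1)/2)) / 2
decreasing_by exact Nat.div_lt_self (Nat.succ_pos n) one_lt_two

lemma vv_rec (x : ℕ) : vv x = ((x % 2 : ℕ) + vv (x/2)) / 2 := by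
  cases x with
  | zero => simp [vv]
  | succ n => rw [vv]

lemma vv_bounds (x : ℕ) : 0 ≤ vv x ∧ vv x < 1 := by
  induction x using Nat.strong_induction_on with
  | _ x ih =>
    rcases Nat.eq_zero_or_pos x with h | h
    · subst h; simp [vv]
    · obtain ⟨h0, h1⟩ := ih (x / 2) (Nat.div_lt_self h one_lt_two)
      rw [vv_rec]
      have hm' : ((x % 2 : ℕ) : ℝ) ≤ 1 := by
        have : x % 2 ≤ 1 := by omega
        exact_mod_cast this
      constructor
      · positivity
      · linarith

lemma vv_nonneg (x : ℕ) : 0 ≤ vv x := (vv_bounds x).1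
lemma vv_lt_one (x : ℕ) : vv x < 1 := (vv_bounds x).2

lemma vv_eq_zero {x : ℕ} (h : vv x = 0) : x = 0 := by
  induction x using Nat.strong_induction_on with
  | _ x ih =>
    rcases Nat.eq_zero_or_pos x with hx | hx
    · exact hx
    · exfalso
      rw [vv_rec] at h
      have h0 := vv_nonneg (x / 2)
      have hm : (0:ℝ) ≤ ((x % 2 : ℕ) : ℝ) := by positivity
      have hb1 : ((x % 2 : ℕ) : ℝ) = 0 := by linarith
      have hb2 : vv (x / 2) = 0 := by linarith
      have hx2 : x % 2 = 0 := by exact_mod_cast hb1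
      have := ih (x / 2) (Nat.div_lt_self hx one_lt_two) hb2
      omega

lemma vv_inj : Function.Injective vv := by
  intro x
  induction x using Nat.strong_induction_on with
  | _ x ih =>
    intro y hxy
    rcases Nat.eq_zero_or_pos x with hx | hx
    · subst hx
      have : vv y = 0 := by rw [← hxy]; simp [vv]
      exact (vv_eq_zero this).symm
    · rcases Nat.eq_zero_or_pos y with hy | hy
      · subst hy
        have : vv x = 0 := by simpa [vv] using hxy
        exact vv_eq_zero this
      · rw [vv_rec x, vv_rec y] at hxy
        have hE : ((x % 2 : ℕ) : ℝ) + vv (x / 2) = ((y % 2 : ℕ) : ℝ) + vv (y / 2) := by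
          linarith
        have hbx := vv_bounds (x / 2)
        have hby := vv_bounds (y / 2)
        have hpar : x % 2 = y % 2 := by
          rcases Nat.mod_two_eq_zero_or_one x with h | h <;>
            rcases Nat.mod_two_eq_zero_or_one y with h' | h' <;>
            rw [h, h'] at hE ⊢ <;>
            first
              | rfl
              | (push_cast at hE; linarith [hbx.1, hbx.2, hby.1, hby.2])
        have hv2 : vv (x / 2) = vv (y / 2) := by
          rw [hpar] at hE; linarith
        have := ih (x / 2) (Nat.div_lt_self hx one_lt_two) hv2
        omega

lemma vv_mod (n : ℕ) : ∀ x : ℕ, vv x = vv (x % 2^n) + vv (x / 2^n) / 2^n := by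
  induction n with
  | zero => intro x; simp [Nat.mod_one, vv]
  | succ n ih =>
    intro x
    have e1 : x % 2 ^ (n+1) % 2 = x % 2 := by
      have : (2:ℕ) ∣ 2 ^ (n+1) := dvd_pow_self 2 (Nat.succ_ne_zero n)
      exact Nat.mod_mod_of_dvd x this
    have e2 : x % 2 ^ (n+1) / 2 = x / 2 % 2 ^ n := by
      rw [pow_succ, mul_comm]
      exact Nat.mod_mul_right_div_self x 2 (2^n)
    have e3 : x / 2 ^ (n+1) = x / 2 / 2 ^ n := by
      rw [pow_succ, mul_comm, Nat.div_div_eq_div_mul, mul_comm]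
    rw [vv_rec x, ih (x / 2), vv_rec (x % 2 ^ (n+1)), e1, e2, e3]
    have h2 : ((2:ℝ)^(n+1)) = 2^n * 2 := by ring
    rw [h2]
    have hp : ((2:ℝ))^n ≠ 0 := by positivity
    field_simp
    ring

lemma vv_dyadic (n : ℕ) : ∀ c : ℕ, c < 2^n → ∃ j : ℕ, j < 2^n ∧ vv c = (j:ℝ) / 2^n := by
  induction n with
  | zero =>
    intro c hc
    interval_cases c
    exact ⟨0, by norm_num, by simp [vv]⟩
  | succ n ih =>
    intro c hc
    have hc2 : c / 2 < 2 ^ n := by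
      rw [pow_succ] at hc; omega
    obtain ⟨j, hj, hvj⟩ := ih (c / 2) hc2
    have hcm : c % 2 ≤ 1 := by omega
    refine ⟨c % 2 * 2 ^ n + j, ?_, ?_⟩
    · have h2n : 0 < 2^n := Nat.pow_pos (by norm_num)
      rw [pow_succ]
      nlinarith
    · rw [vv_rec c, hvj]
      have h2 : ((2:ℝ)^(n+1)) = 2^n * 2 := by ring
      push_cast
      rw [h2]
      have hp : ((2:ℝ))^n ≠ 0 := by positivity
      field_simp
      try ring

/-- every x has vv x in the dyadic slab determined by x % 2^n -/
lemma vv_slab_mem (n x : ℕ) : ∃ j : ℕ, j < 2^n ∧ vv (x % 2^n) = (j:ℝ)/2^n ∧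
    (j:ℝ)/2^n ≤ vv x ∧ vv x < ((j:ℝ)+1)/2^n := by
  have hlt : x % 2^n < 2^n := Nat.mod_lt _ (Nat.pow_pos (by norm_num))
  obtain ⟨j, hj, hvj⟩ := vv_dyadic n (x % 2^n) hlt
  have hp : (0:ℝ) < 2^n := by positivity
  have hdecomp := vv_mod n x
  have h0 := vv_nonneg (x / 2^n)
  have h1 := vv_lt_one (x / 2^n)
  refine ⟨j, hj, hvj, ?_, ?_⟩
  · rw [hdecomp, hvj]
    have : 0 ≤ vv (x / 2^n) / 2^n := by positivity
    linarith
  · rw [hdecomp, hvj]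
    have hlt1 : vv (x / 2^n) / 2^n < 1 / 2^n := by
      have := mul_lt_mul_of_pos_right h1 (by positivity : (0:ℝ) < ((2:ℝ)^n)⁻¹)
      simpa [div_eq_mul_inv] using this
    have heq : ((j:ℝ))/2^n + 1/2^n = ((j:ℝ)+1)/2^n := by ring
    linarith

section MuLemmas

variable (μ : Set ℕ → ℝ)
  (h2 : ∀ X : Set ℕ, μ X ≤ 1)
  (h3 : ∀ X Y : Set ℕ, μ (X ∪ Y) ≤ μ X + μ Y)
  (h4 : ∀ (X : Set ℕ) (h k : ℕ), 0 < h → 0 < k →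
      μ (affImage k h X) = (1 / (k : ℝ)) * μ X)

include h4 in
lemma mu_empty_s13 : μ ∅ = 0 := by
  have e := h4 ∅ 1 2 one_pos two_pos
  simp [affImage] at e
  linarith

include h4 in
lemma mu_zero_singleton : μ {0} = 0 := by
  have e2 := h4 {0} 1 2 one_pos two_pos
  have e3 := h4 {0} 1 3 one_pos three_pos
  have i2 : affImage 2 1 {0} = {1} := by simp [affImage]
  have i3 : affImage 3 1 {0} = {1} := by simp [affImage]
  rw [i2] at e2; rw [i3] at e3
  rw [e2] at e3
  linarith

include h2 h4 in
lemma mu_sub_prog (k h : ℕ) (hh : 0 < h) (hk : 0 < k) (W : Set ℕ)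
    (hW : ∀ x ∈ W, ∃ y, x = k * y + h) : μ W ≤ 1 / k := by
  have hWeq : W = affImage k h {y | k * y + h ∈ W} := by
    ext x
    constructor
    · intro hx
      obtain ⟨y, rfl⟩ := hW x hx
      exact ⟨y, hx, rfl⟩
    · rintro ⟨y, hy, rfl⟩; exact hy
  rw [hWeq, h4 _ h k hh hk]
  have hkR : (0:ℝ) < (k:ℝ) := by exact_mod_cast hk
  have := h2 {y | k * y + h ∈ W}
  have h1k : (0:ℝ) < 1 / k := by positivity
  nlinarith

include h2 h3 h4 in
lemma mu_slab (n j : ℕ) (W : Set ℕ)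
    (hW : ∀ x ∈ W, (j:ℝ)/2^n ≤ vv x ∧ vv x < ((j:ℝ)+1)/2^n) :
    μ W ≤ 1 / 2^n := by
  rcases W.eq_empty_or_nonempty with rfl | ⟨x0, hx0⟩
  · rw [mu_empty_s13 μ h4]
    positivity
  · have hp : (0:ℝ) < 2^n := by positivity
    have hnp : 0 < 2^n := Nat.pow_pos (by norm_num)
    -- all elements of W are ≡ x0 mod 2^n
    have hmodc : ∀ x ∈ W, x % 2^n = x0 % 2^n := by
      intro x hx
      have key : ∀ z ∈ W, vv (z % 2^n) = (j:ℝ)/2^n := by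
        intro z hz
        obtain ⟨jz, hjz, hvjz, hlo, hhi⟩ := vv_slab_mem n z
        have hWz := hW z hz
        have hj1 : (jz:ℝ) < (j:ℝ) + 1 := by
          have h5 : (jz:ℝ)/2^n < ((j:ℝ)+1)/2^n := lt_of_le_of_lt hlo hWz.2
          calc (jz:ℝ) = (jz:ℝ)/2^n * 2^n := by field_simp
            _ < ((j:ℝ)+1)/2^n * 2^n := by exact mul_lt_mul_of_pos_right h5 hp
            _ = (j:ℝ)+1 := by field_simp
        have hj2 : (j:ℝ) < (jz:ℝ) + 1 := by
          have h5 : (j:ℝ)/2^n < ((jz:ℝ)+1)/2^n := lt_of_le_of_lt hWz.1 hhi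
          calc (j:ℝ) = (j:ℝ)/2^n * 2^n := by field_simp
            _ < ((jz:ℝ)+1)/2^n * 2^n := by exact mul_lt_mul_of_pos_right h5 hp
            _ = (jz:ℝ)+1 := by field_simp
        have hj1' : jz < j + 1 := by exact_mod_cast (by push_cast; linarith : (jz:ℝ) < ((j+1:ℕ):ℝ))
        have hj2' : j < jz + 1 := by exact_mod_cast (by push_cast; linarith : (j:ℝ) < ((jz+1:ℕ):ℝ))
        have : jz = j := by omega
        rw [← this]; exact hvjz
      have e1 := key x hx
      have e2 := key x0 hx0
      exact vv_inj (e1.trans e2.symm)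
    rcases Nat.eq_zero_or_pos (x0 % 2^n) with hc0 | hcpos
    · -- residue 0 : split off {0}
      have hsplit : W = (W ∩ {0}) ∪ (W \ {0}) := by
        simp [Set.inter_union_diff]
      have hle := h3 (W ∩ {0}) (W \ {0})
      have hW0 : μ (W ∩ {0}) ≤ 0 := by
        rcases Set.subset_singleton_iff_eq.mp (Set.inter_subset_right) with h | h
        · rw [h, mu_empty_s13 μ h4]
        · rw [h, mu_zero_singleton μ h4]
      have hW1 : μ (W \ {0}) ≤ 1 / 2^n := by
        have hcast : ((2^n : ℕ):ℝ) = (2:ℝ)^n := by push_cast; ring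
        rw [show (1:ℝ)/2^n = 1/((2^n : ℕ):ℝ) by rw [hcast]]
        apply mu_sub_prog μ h2 h4 (2^n) (2^n) hnp hnp
        intro x hx
        have hxmod : x % 2^n = 0 := by rw [hmodc x hx.1, hc0]
        have hxne : x ≠ 0 := hx.2
        have hdm := Nat.div_add_mod x (2^n)
        rw [hxmod] at hdm
        have hq : 1 ≤ x / 2^n := by
          rcases Nat.eq_zero_or_pos (x / 2^n) with h | h
          · rw [h] at hdm; omega
          · exact h
        obtain ⟨q', hq'⟩ : ∃ q', x / 2^n = q' + 1 := ⟨x / 2^n - 1, by omega⟩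
        refine ⟨q', ?_⟩
        rw [hq'] at hdm
        rw [← hdm]
        ring
      calc μ W = μ ((W ∩ {0}) ∪ (W \ {0})) := by rw [← hsplit]
        _ ≤ μ (W ∩ {0}) + μ (W \ {0}) := hle
        _ ≤ 0 + 1/2^n := add_le_add hW0 hW1
        _ = 1/2^n := by ring
    · -- positive residue
      have hclt : x0 % 2^n < 2^n := Nat.mod_lt _ hnp
      have hcast : ((2^n : ℕ):ℝ) = (2:ℝ)^n := by push_cast; ring
      rw [show (1:ℝ)/2^n = 1/((2^n : ℕ):ℝ) by rw [hcast]]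
      apply mu_sub_prog μ h2 h4 (2^n) (x0 % 2^n) hcpos hnp
      intro x hx
      have hdm := Nat.div_add_mod x (2^n)
      rw [hmodc x hx] at hdm
      exact ⟨x / 2^n, hdm.symm⟩

include h2 h3 h4 in
lemma mu_band (n k : ℕ) : ∀ (j : ℕ) (W : Set ℕ),
    (∀ x ∈ W, (j:ℝ)/2^n ≤ vv x ∧ vv x < ((j:ℝ)+(k:ℝ))/2^n) → μ W ≤ (k:ℝ)/2^n := by
  induction k with
  | zero =>
    intro j W hW
    have : W = ∅ := by
      rw [Set.eq_empty_iff_forall_notMem]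
      intro x hx
      obtain ⟨h5, h6⟩ := hW x hx
      simp at h6
      linarith
    rw [this, mu_empty_s13 μ h4]
    simp
  | succ k ih =>
    intro j W hW
    set W1 : Set ℕ := {x ∈ W | vv x < ((j:ℝ)+(k:ℝ))/2^n} with hW1def
    have hsplit : W = W1 ∪ (W \ W1) := by
      ext x; constructor
      · intro hx
        by_cases h : vv x < ((j:ℝ)+(k:ℝ))/2^n
        · exact Or.inl ⟨hx, h⟩
        · exact Or.inr ⟨hx, fun hc => h hc.2⟩
      · rintro (hx | hx)
        · exact hx.1
        · exact hx.1
    have b1 : μ W1 ≤ (k:ℝ)/2^n := by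
      apply ih j
      intro x hx
      exact ⟨(hW x hx.1).1, hx.2⟩
    have b2 : μ (W \ W1) ≤ 1/2^n := by
      apply mu_slab μ h2 h3 h4 n (j + k)
      intro x hx
      have hx1 := hW x hx.1
      have hnlt : ¬ (vv x < ((j:ℝ)+(k:ℝ))/2^n) := fun hc => hx.2 ⟨hx.1, hc⟩
      push_cast
      constructor
      · linarith [le_of_not_gt hnlt]
      · have := hx1.2
        push_cast at this
        have e : ((j:ℝ) + ((k:ℝ)+1))/2^n = ((j:ℝ)+(k:ℝ)+1)/2^n := by ring
        rw [e] at this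
        linarith
    calc μ W = μ (W1 ∪ (W \ W1)) := by rw [← hsplit]
      _ ≤ μ W1 + μ (W \ W1) := h3 _ _
      _ ≤ (k:ℝ)/2^n + 1/2^n := add_le_add b1 b2
      _ = ((k:ℝ)+1)/2^n := by ring
      _ = (((k+1):ℕ):ℝ)/2^n := by push_cast; ring

end MuLemmas
def dyadics : Set ℝ := {q | ∃ n j : ℕ, j ≤ 2^n ∧ q = (j:ℝ)/2^n}

section BandD
variable (μ : Set ℕ → ℝ)
  (h2 : ∀ X : Set ℕ, μ X ≤ 1)
  (h3 : ∀ X Y : Set ℕ, μ (X ∪ Y) ≤ μ X + μ Y)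
  (h4 : ∀ (X : Set ℕ) (h k : ℕ), 0 < h → 0 < k →
      μ (affImage k h X) = (1 / (k : ℝ)) * μ X)

include h2 h3 h4 in
lemma mu_bandD (s u : ℝ) (hs : s ∈ dyadics) (hu : u ∈ dyadics) (hsu : s ≤ u)
    (W : Set ℕ) (hW : ∀ x ∈ W, s ≤ vv x ∧ vv x < u) : μ W ≤ u - s := by
  obtain ⟨n, j, hj, rfl⟩ := hs
  obtain ⟨m, i, hi, rfl⟩ := hu
  have hpn : (0:ℝ) < (2:ℝ)^n := by positivity
  have hpm : (0:ℝ) < (2:ℝ)^m := by positivity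
  have hpN : (0:ℝ) < (2:ℝ)^(n+m) := by positivity
  have hsJ : ((j * 2^m : ℕ):ℝ)/2^(n+m) = (j:ℝ)/2^n := by
    push_cast
    rw [pow_add]
    rw [div_eq_div_iff (by positivity) (ne_of_gt hpn)]
    ring
  have hsI : ((i * 2^n : ℕ):ℝ)/2^(n+m) = (i:ℝ)/2^m := by
    push_cast
    rw [pow_add]
    rw [div_eq_div_iff (by positivity) (ne_of_gt hpm)]
    ring
  have hJI : (j * 2^m : ℕ) ≤ (i * 2^n : ℕ) := by
    have h5 : ((j * 2^m : ℕ):ℝ) ≤ ((i * 2^n : ℕ):ℝ) := by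
      have h6 := mul_le_mul_of_nonneg_right hsu (le_of_lt hpN)
      rw [← hsJ, ← hsI] at h6
      calc ((j * 2^m : ℕ):ℝ) = ((j * 2^m : ℕ):ℝ)/2^(n+m) * 2^(n+m) := by field_simp
        _ ≤ ((i * 2^n : ℕ):ℝ)/2^(n+m) * 2^(n+m) := h6
        _ = ((i * 2^n : ℕ):ℝ) := by field_simp
    exact_mod_cast h5
  have hband := mu_band μ h2 h3 h4 (n+m) (i * 2^n - j * 2^m) (j * 2^m) W ?_
  · have hc : ((i * 2^n - j * 2^m : ℕ):ℝ) = ((i * 2^n : ℕ):ℝ) - ((j * 2^m : ℕ):ℝ) := by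
      rw [Nat.cast_sub hJI]
    rw [hc] at hband
    have e : (((i * 2^n : ℕ):ℝ) - ((j * 2^m : ℕ):ℝ))/2^(n+m)
        = ((i * 2^n : ℕ):ℝ)/2^(n+m) - ((j * 2^m : ℕ):ℝ)/2^(n+m) := by ring
    rw [e, hsJ, hsI] at hband
    exact hband
  · intro x hx
    obtain ⟨hlo, hhi⟩ := hW x hx
    constructor
    · rw [hsJ]; exact hlo
    · have hc : ((j * 2^m : ℕ):ℝ) + ((i * 2^n - j * 2^m : ℕ):ℝ) = ((i * 2^n : ℕ):ℝ) := by
        rw [Nat.cast_sub hJI]; ring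
      rw [hc, hsI]
      exact hhi

end BandD

theorem stmt13 (μ : Set ℕ → ℝ)
    (h1 : μ Set.univ = 1)
    (h2 : ∀ X : Set ℕ, μ X ≤ 1)
    (h3 : ∀ X Y : Set ℕ, μ (X ∪ Y) ≤ μ X + μ Y)
    (h4 : ∀ (X : Set ℕ) (h k : ℕ), 0 < h → 0 < k →
      μ (affImage k h X) = (1 / (k : ℝ)) * μ X) :
    ∀ X Y : Set ℕ, X ⊆ Y → ∀ a : ℝ, μ X ≤ a → a ≤ μ Y →
      ∃ A : Set ℕ, X ⊆ A ∧ A ⊆ Y ∧ μ A = a := by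
  intro X Y hXY a haX haY
  have hSv0 : {x : ℕ | vv x < (0:ℝ)} = ∅ := by
    rw [Set.eq_empty_iff_forall_notMem]
    intro x hx
    exact absurd hx (not_lt.mpr (vv_nonneg x))
  have hSv1 : {x : ℕ | vv x < (1:ℝ)} = Set.univ := by
    ext x; simp [vv_lt_one x]
  have hg1 : μ (X ∪ (Y ∩ {x : ℕ | vv x < (1:ℝ)})) = μ Y := by
    rw [hSv1, Set.inter_univ, Set.union_eq_self_of_subset_left hXY]
  by_cases hY1 : μ (X ∪ (Y ∩ {x : ℕ | vv x < (1:ℝ)})) ≤ a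
  · exact ⟨Y, hXY, subset_rfl, le_antisymm (by rwa [hg1] at hY1) haY⟩
  push_neg at hY1
  rw [hg1] at hY1
  -- good dyadic levels
  set G : Set ℝ := {q | q ∈ dyadics ∧ μ (X ∪ (Y ∩ {x : ℕ | vv x < q})) ≤ a} with hGdef
  have h0G : (0:ℝ) ∈ G := by
    refine ⟨⟨0, 0, by norm_num, by norm_num⟩, ?_⟩
    rw [hSv0, Set.inter_empty, Set.union_empty]
    exact haX
  have hGne : G.Nonempty := ⟨0, h0G⟩
  have hDle1 : ∀ q ∈ dyadics, q ≤ 1 := by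
    rintro q ⟨n, j, hj, rfl⟩
    have hp : (0:ℝ) < (2:ℝ)^n := by positivity
    have hjr : (j:ℝ) ≤ (2:ℝ)^n := by exact_mod_cast hj
    rw [div_le_one hp]
    exact hjr
  have hGbdd : BddAbove G := ⟨1, fun q hq => hDle1 q hq.1⟩
  set t := sSup G with htdef
  have ht0 : 0 ≤ t := le_csSup hGbdd h0G
  have ht1 : t ≤ 1 := csSup_le hGne (fun q hq => hDle1 q hq.1)
  -- the candidate set
  set A : Set ℕ := X ∪ (Y ∩ {x | ∃ q ∈ G, vv x < q}) with hAdef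
  have hXA : X ⊆ A := Set.subset_union_left
  have hAY : A ⊆ Y := Set.union_subset hXY Set.inter_subset_left
  refine ⟨A, hXA, hAY, ?_⟩
  have key : ∀ ε : ℝ, 0 < ε → μ A ≤ a + (ε + ε) ∧ a ≤ μ A + (ε + ε) := by
    intro ε hε
    obtain ⟨s, hsG, hs⟩ := exists_lt_of_lt_csSup hGne (by linarith : t - ε < t)
    have hst : s ≤ t := le_csSup hGbdd hsG
    -- choose u
    have hu : ∃ u, u ∈ dyadics ∧ t ≤ u ∧ u ≤ t + ε ∧
        a < μ (X ∪ (Y ∩ {x : ℕ | vv x < u})) := by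
      obtain ⟨n, hn⟩ : ∃ n : ℕ, (1:ℝ)/2^n < ε := by
        obtain ⟨n, hn⟩ := pow_unbounded_of_one_lt (1/ε) (by norm_num : (1:ℝ) < 2)
        refine ⟨n, ?_⟩
        rw [div_lt_iff₀ (by positivity : (0:ℝ) < 2^n)]
        rw [div_lt_iff₀ hε] at hn
        linarith
      have hp : (0:ℝ) < (2:ℝ)^n := by positivity
      by_cases hcase : Nat.floor (t * 2^n) + 1 ≤ 2^n
      · set j : ℕ := Nat.floor (t * 2^n) + 1 with hjdef
        have hjr : t * 2^n < (j:ℝ) := by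
          have := Nat.lt_floor_add_one (t * 2^n)
          rw [hjdef]; push_cast; linarith
        have htu : t < (j:ℝ)/2^n := (lt_div_iff₀ hp).mpr hjr
        have hub : (j:ℝ)/2^n ≤ t + ε := by
          have hfl : ((Nat.floor (t * 2^n) : ℕ):ℝ) ≤ t * 2^n :=
            Nat.floor_le (by positivity)
          have hjc : (j:ℝ) ≤ t * 2^n + 1 := by
            rw [hjdef]; push_cast; linarith
          rw [div_le_iff₀ hp]
          have : (t + ε) * 2^n = t * 2^n + ε * 2^n := by ring
          rw [this]
          have h1n : (1:ℝ) ≤ ε * 2^n := by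
            rw [div_lt_iff₀ hp] at hn
            linarith
          linarith
        refine ⟨(j:ℝ)/2^n, ⟨n, j, hcase, rfl⟩, le_of_lt htu, hub, ?_⟩
        by_contra hgu
        push_neg at hgu
        have hmem : (j:ℝ)/2^n ∈ G := ⟨⟨n, j, hcase, rfl⟩, hgu⟩
        have := le_csSup hGbdd hmem
        linarith
      · -- t = 1
        push_neg at hcase
        have h2f : 2^n ≤ Nat.floor (t * 2^n) := by omega
        have : ((2^n : ℕ):ℝ) ≤ t * 2^n := by
          have := (Nat.le_floor_iff (by positivity : (0:ℝ) ≤ t * 2^n)).mp h2f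
          exact this
        have h1t : 1 ≤ t := by
          have hc : ((2^n : ℕ):ℝ) = (2:ℝ)^n := by push_cast; ring
          rw [hc] at this
          nlinarith
        refine ⟨1, ⟨0, 1, by norm_num, by norm_num⟩, ht1, by linarith, ?_⟩
        rw [hg1]; exact hY1
    obtain ⟨u, huD, htu, hue, hgu⟩ := hu
    have hsu : s ≤ u := le_trans hst htu
    have hsD : s ∈ dyadics := hsG.1
    -- Y ∩ Sv s ⊆ A
    have hsub1 : X ∪ (Y ∩ {x : ℕ | vv x < s}) ⊆ A := by
      apply Set.union_subset hXA
      intro x hx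
      exact Or.inr ⟨hx.1, ⟨s, hsG, hx.2⟩⟩
    -- A ⊆ X ∪ (Y ∩ Sv u)
    have hsub2 : A ⊆ X ∪ (Y ∩ {x : ℕ | vv x < u}) := by
      rintro x (hx | ⟨hxY, q, hqG, hq⟩)
      · exact Or.inl hx
      · refine Or.inr ⟨hxY, ?_⟩
        have : q ≤ t := le_csSup hGbdd hqG
        exact lt_of_lt_of_le hq (le_trans this htu)
    constructor
    · -- upper bound
      have hAeq : A = (X ∪ (Y ∩ {x : ℕ | vv x < s}))
          ∪ (A \ (X ∪ (Y ∩ {x : ℕ | vv x < s}))) := (Set.union_diff_cancel hsub1).symm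
      have hdb : μ (A \ (X ∪ (Y ∩ {x : ℕ | vv x < s}))) ≤ u - s := by
        apply mu_bandD μ h2 h3 h4 s u hsD huD hsu
        rintro x ⟨hxA, hxn⟩
        constructor
        · by_contra hlt
          push_neg at hlt
          exact hxn (Or.inr ⟨hAY hxA, hlt⟩)
        · rcases hsub2 hxA with hx | hx
          · exact absurd (Or.inl hx) hxn
          · exact hx.2
      calc μ A = μ ((X ∪ (Y ∩ {x : ℕ | vv x < s}))
            ∪ (A \ (X ∪ (Y ∩ {x : ℕ | vv x < s})))) := by rw [← hAeq]
        _ ≤ μ (X ∪ (Y ∩ {x : ℕ | vv x < s}))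
            + μ (A \ (X ∪ (Y ∩ {x : ℕ | vv x < s}))) := h3 _ _
        _ ≤ a + (u - s) := add_le_add hsG.2 hdb
        _ ≤ a + (ε + ε) := by linarith
    · -- lower bound
      have hBeq : X ∪ (Y ∩ {x : ℕ | vv x < u})
          = A ∪ ((X ∪ (Y ∩ {x : ℕ | vv x < u})) \ A) := (Set.union_diff_cancel hsub2).symm
      have hdb : μ ((X ∪ (Y ∩ {x : ℕ | vv x < u})) \ A) ≤ u - s := by
        apply mu_bandD μ h2 h3 h4 s u hsD huD hsu
        rintro x ⟨hxB, hxn⟩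
        constructor
        · by_contra hlt
          push_neg at hlt
          rcases hxB with hx | hx
          · exact hxn (hXA hx)
          · exact hxn (Or.inr ⟨hx.1, ⟨s, hsG, hlt⟩⟩)
        · rcases hxB with hx | hx
          · exact absurd (hXA hx) hxn
          · exact hx.2
      have := h3 A ((X ∪ (Y ∩ {x : ℕ | vv x < u})) \ A)
      rw [← hBeq] at this
      have hchain : a < μ A + (u - s) := lt_of_lt_of_le hgu (by linarith)
      linarith
  -- conclude
  have hle : μ A ≤ a := by
    by_contra h
    push_neg at h
    obtain ⟨k1, _⟩ := key ((μ A - a)/4) (by linarith)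
    linarith
  have hge : a ≤ μ A := by
    by_contra h
    push_neg at h
    obtain ⟨_, k2⟩ := key ((a - μ A)/4) (by linarith)
    linarith
  linarith
end

section
/- If μ* is an upper quasi-density on ℕ, then for every X ⊆ ℕ and every a ∈ [0, μ*(X)] there is a subset A ⊆ X with μ*(A) = a (the weak Darboux property). -/
lemma modTwoMul (x k : ℕ) (hk : 0 < k) :
    x % (2 * k) = x % k ∨ x % (2 * k) = x % k + k := by
  have h1 : x % k = (x % (2 * k)) % k := (Nat.mod_mod_of_dvd x ⟨2, by ring⟩).symm
  have h2 : x % (2 * k) < 2 * k := Nat.mod_lt _ (by omega)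
  rcases Nat.lt_or_ge (x % (2 * k)) k with h | h
  · left; rw [h1, Nat.mod_eq_of_lt h]
  · right
    have h3 : x % (2 * k) - k < k := by omega
    rw [h1, Nat.mod_eq_sub_mod h, Nat.mod_eq_of_lt h3]
    omega

/-- Any subset of an arithmetic progression mod `k` has `μ`-value at most `1/k`. -/
lemma apBound (μ : Set ℕ → ℝ)
    (h2 : ∀ X : Set ℕ, μ X ≤ 1)
    (h4 : ∀ (X : Set ℕ) (h k : ℕ), 0 < h → 0 < k →
      μ (affImage k h X) = (1 / (k : ℝ)) * μ X)
    (S : Set ℕ) (k r : ℕ) (hk : 0 < k) (hmod : ∀ x ∈ S, x % k = r) :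
    μ S ≤ 1 / (k : ℝ) := by
  have e1 : μ (affImage 1 k S) = μ S := by
    rw [h4 S k 1 hk one_pos]; norm_num
  have e2 : affImage 1 k S = affImage k (r + k) ((fun s => s / k) '' S) := by
    ext t
    constructor
    · rintro ⟨s, hs, rfl⟩
      refine ⟨s / k, ⟨s, hs, rfl⟩, ?_⟩
      have hq : k * (s / k) + r = s := by
        rw [← hmod s hs]; exact Nat.div_add_mod s k
      show k * (s / k) + (r + k) = 1 * s + k
      have h5 : k * (s / k) + (r + k) = (k * (s / k) + r) + k := by ring
      rw [h5, hq]; ring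
    · rintro ⟨q, ⟨s, hs, rfl⟩, rfl⟩
      refine ⟨s, hs, ?_⟩
      show 1 * s + k = k * (s / k) + (r + k)
      have hq : k * (s / k) + r = s := by
        rw [← hmod s hs]; exact Nat.div_add_mod s k
      have h5 : k * (s / k) + (r + k) = (k * (s / k) + r) + k := by ring
      rw [h5, hq]; ring
  have e3 := h4 ((fun s => s / k) '' S) (r + k) k (by omega) hk
  have hk' : (0 : ℝ) < (k : ℝ) := by exact_mod_cast hk
  calc μ S = (1 / (k : ℝ)) * μ ((fun s => s / k) '' S) := by rw [← e3, ← e2, e1]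
    _ ≤ (1 / (k : ℝ)) * 1 := mul_le_mul_of_nonneg_left (h2 _) (by positivity)
    _ = 1 / (k : ℝ) := mul_one _

lemma muEmpty (μ : Set ℕ → ℝ)
    (h2 : ∀ X : Set ℕ, μ X ≤ 1)
    (h3 : ∀ X Y : Set ℕ, μ (X ∪ Y) ≤ μ X + μ Y)
    (h4 : ∀ (X : Set ℕ) (h k : ℕ), 0 < h → 0 < k →
      μ (affImage k h X) = (1 / (k : ℝ)) * μ X) :
    μ (∅ : Set ℕ) = 0 := by
  have hn : 0 ≤ μ (∅ : Set ℕ) := by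
    have := h3 ∅ ∅
    simp only [Set.union_empty] at this
    linarith
  have hup : ∀ n : ℕ, μ (∅ : Set ℕ) ≤ 1 / ((n + 1 : ℕ) : ℝ) := fun n =>
    apBound μ h2 h4 ∅ (n + 1) 0 (Nat.succ_pos n) (fun x hx => absurd hx (Set.notMem_empty x))
  by_contra hne
  have hpos : 0 < μ (∅ : Set ℕ) := lt_of_le_of_ne hn (Ne.symm hne)
  obtain ⟨n, hn2⟩ := exists_nat_one_div_lt hpos
  have := hup n
  push_cast at this hn2
  linarith

open Classical in
/-- Greedy binary-splitting construction: the state `(A, R, r)` consists of the set `A` built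
so far, the remainder `R` (a subset of the residue class `r` mod `2^n`), and the residue `r`. -/
noncomputable def darbSt (μ : Set ℕ → ℝ) (a : ℝ) (X : Set ℕ) : ℕ → Set ℕ × Set ℕ × ℕ
  | 0 => (∅, X, 0)
  | n + 1 =>
    let p := darbSt μ a X n
    let P := p.2.1 ∩ {x | x % 2 ^ (n + 1) = p.2.2}
    let Q := p.2.1 ∩ {x | x % 2 ^ (n + 1) = p.2.2 + 2 ^ n}
    if μ (p.1 ∪ P) ≤ a then (p.1 ∪ P, Q, p.2.2 + 2 ^ n) else (p.1, P, p.2.2)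

noncomputable def dA (μ : Set ℕ → ℝ) (a : ℝ) (X : Set ℕ) (n : ℕ) : Set ℕ := (darbSt μ a X n).1
noncomputable def dR (μ : Set ℕ → ℝ) (a : ℝ) (X : Set ℕ) (n : ℕ) : Set ℕ := (darbSt μ a X n).2.1
noncomputable def dr (μ : Set ℕ → ℝ) (a : ℝ) (X : Set ℕ) (n : ℕ) : ℕ := (darbSt μ a X n).2.2

open Classical in
lemma darbSt_succ (μ : Set ℕ → ℝ) (a : ℝ) (X : Set ℕ) (n : ℕ) :
    darbSt μ a X (n + 1) =
      if μ ((darbSt μ a X n).1 ∪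
          ((darbSt μ a X n).2.1 ∩ {x | x % 2 ^ (n + 1) = (darbSt μ a X n).2.2})) ≤ a then
        ((darbSt μ a X n).1 ∪
            ((darbSt μ a X n).2.1 ∩ {x | x % 2 ^ (n + 1) = (darbSt μ a X n).2.2}),
          (darbSt μ a X n).2.1 ∩ {x | x % 2 ^ (n + 1) = (darbSt μ a X n).2.2 + 2 ^ n},
          (darbSt μ a X n).2.2 + 2 ^ n)
      else ((darbSt μ a X n).1,
        (darbSt μ a X n).2.1 ∩ {x | x % 2 ^ (n + 1) = (darbSt μ a X n).2.2},
        (darbSt μ a X n).2.2) := rfl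

lemma dstep (μ : Set ℕ → ℝ) (a : ℝ) (X : Set ℕ) (n : ℕ) :
    (μ (dA μ a X n ∪ (dR μ a X n ∩ {x | x % 2 ^ (n + 1) = dr μ a X n})) ≤ a ∧
      dA μ a X (n + 1) = dA μ a X n ∪ (dR μ a X n ∩ {x | x % 2 ^ (n + 1) = dr μ a X n}) ∧
      dR μ a X (n + 1) = dR μ a X n ∩ {x | x % 2 ^ (n + 1) = dr μ a X n + 2 ^ n} ∧
      dr μ a X (n + 1) = dr μ a X n + 2 ^ n) ∨
    (a < μ (dA μ a X n ∪ (dR μ a X n ∩ {x | x % 2 ^ (n + 1) = dr μ a X n})) ∧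
      dA μ a X (n + 1) = dA μ a X n ∧
      dR μ a X (n + 1) = dR μ a X n ∩ {x | x % 2 ^ (n + 1) = dr μ a X n} ∧
      dr μ a X (n + 1) = dr μ a X n) := by
  by_cases hc : μ (dA μ a X n ∪ (dR μ a X n ∩ {x | x % 2 ^ (n + 1) = dr μ a X n})) ≤ a
  · left
    refine ⟨hc, ?_, ?_, ?_⟩ <;>
      · simp only [dA, dR, dr] at hc
        simp only [dA, dR, dr]
        rw [darbSt_succ, if_pos hc]
  · right
    refine ⟨lt_of_not_ge hc, ?_, ?_, ?_⟩ <;>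
      · simp only [dA, dR, dr] at hc
        simp only [dA, dR, dr]
        rw [darbSt_succ, if_neg hc]

lemma dmod (μ : Set ℕ → ℝ) (a : ℝ) (X : Set ℕ) :
    ∀ n, ∀ x ∈ dR μ a X n, x % 2 ^ n = dr μ a X n := by
  intro n
  cases n with
  | zero => intro x _; simp [dR, dr, darbSt, Nat.mod_one]
  | succ n =>
    rcases dstep μ a X n with ⟨_, _, hR, hr⟩ | ⟨_, _, hR, hr⟩ <;>
      · rw [hR, hr]; rintro x ⟨_, hx2⟩; exact hx2

lemma dPQ (μ : Set ℕ → ℝ) (a : ℝ) (X : Set ℕ) (n : ℕ) :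
    (dR μ a X n ∩ {x | x % 2 ^ (n + 1) = dr μ a X n}) ∪
      (dR μ a X n ∩ {x | x % 2 ^ (n + 1) = dr μ a X n + 2 ^ n}) = dR μ a X n := by
  apply Set.Subset.antisymm
  · exact Set.union_subset Set.inter_subset_left Set.inter_subset_left
  · intro x hx
    have hm := dmod μ a X n x hx
    have h2n : (0 : ℕ) < 2 ^ n := Nat.pow_pos (n := n) (by norm_num)
    have he : (2 : ℕ) ^ (n + 1) = 2 * 2 ^ n := by rw [pow_succ]; ring
    rcases modTwoMul x (2 ^ n) h2n with h | h
    · left; exact ⟨hx, by simp only [Set.mem_setOf_eq]; rw [he, h, hm]⟩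
    · right; exact ⟨hx, by simp only [Set.mem_setOf_eq]; rw [he, h, hm]⟩

theorem stmt16 (μ : Set ℕ → ℝ)
    (h1 : μ Set.univ = 1)
    (h2 : ∀ X : Set ℕ, μ X ≤ 1)
    (h3 : ∀ X Y : Set ℕ, μ (X ∪ Y) ≤ μ X + μ Y)
    (h4 : ∀ (X : Set ℕ) (h k : ℕ), 0 < h → 0 < k →
      μ (affImage k h X) = (1 / (k : ℝ)) * μ X) :
    ∀ X : Set ℕ, ∀ a : ℝ, 0 ≤ a → a ≤ μ X →
      ∃ A : Set ℕ, A ⊆ X ∧ μ A = a := by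
  intro X a ha haX
  have hA0 : dA μ a X 0 = ∅ := rfl
  have hR0 : dR μ a X 0 = X := rfl
  -- the main invariant
  have hinv : ∀ n, μ (dA μ a X n) ≤ a ∧ a ≤ μ (dA μ a X n ∪ dR μ a X n) := by
    intro n
    induction n with
    | zero =>
      constructor
      · rw [hA0, muEmpty μ h2 h3 h4]; exact ha
      · rw [hA0, hR0, Set.empty_union]; exact haX
    | succ n ih =>
      rcases dstep μ a X n with ⟨hc, hAe, hRe, _⟩ | ⟨hc, hAe, hRe, _⟩
      · constructor
        · rw [hAe]; exact hc
        · rw [hAe, hRe, Set.union_assoc, dPQ]; exact ih.2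
      · constructor
        · rw [hAe]; exact ih.1
        · rw [hAe, hRe]; exact le_of_lt hc
  -- structural facts
  have hAsub : ∀ n, dA μ a X n ⊆ dA μ a X (n + 1) := by
    intro n
    rcases dstep μ a X n with ⟨_, hAe, _, _⟩ | ⟨_, hAe, _, _⟩
    · rw [hAe]; exact Set.subset_union_left
    · rw [hAe]
  have hRsub : ∀ n, dR μ a X (n + 1) ⊆ dR μ a X n := by
    intro n
    rcases dstep μ a X n with ⟨_, _, hRe, _⟩ | ⟨_, _, hRe, _⟩ <;>
      · rw [hRe]; exact Set.inter_subset_left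
  have hAR : ∀ n, dA μ a X (n + 1) ⊆ dA μ a X n ∪ dR μ a X n := by
    intro n
    rcases dstep μ a X n with ⟨_, hAe, _, _⟩ | ⟨_, hAe, _, _⟩
    · rw [hAe]
      exact Set.union_subset_union_right _ Set.inter_subset_left
    · rw [hAe]; exact Set.subset_union_left
  have hAmono : ∀ m n, m ≤ n → dA μ a X m ⊆ dA μ a X n := by
    intro m n hmn
    induction n with
    | zero => rw [Nat.le_zero.mp hmn]
    | succ n ih =>
      rcases Nat.lt_or_ge m (n + 1) with h | h
      · exact (ih (Nat.lt_succ_iff.mp h)).trans (hAsub n)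
      · rw [Nat.le_antisymm hmn h]
  have hRmono : ∀ m n, m ≤ n → dR μ a X n ⊆ dR μ a X m := by
    intro m n hmn
    induction n with
    | zero => rw [Nat.le_zero.mp hmn]
    | succ n ih =>
      rcases Nat.lt_or_ge m (n + 1) with h | h
      · exact (hRsub n).trans (ih (Nat.lt_succ_iff.mp h))
      · rw [Nat.le_antisymm hmn h]
  have hcov : ∀ n m, dA μ a X m ⊆ dA μ a X n ∪ dR μ a X n := by
    intro n m
    rcases Nat.le_total m n with h | h
    · exact (hAmono m n h).trans Set.subset_union_left
    · induction m with
      | zero =>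
        rw [Nat.le_zero.mp h]; exact Set.subset_union_left
      | succ m ih =>
        rcases Nat.lt_or_ge n (m + 1) with h' | h'
        · have := ih (Nat.lt_succ_iff.mp h')
          refine (hAR m).trans (Set.union_subset this ?_)
          exact (hRmono n m (Nat.lt_succ_iff.mp h')).trans Set.subset_union_right
        · rw [Nat.le_antisymm h h']; exact Set.subset_union_left
  -- subsets of X
  have hRX : ∀ n, dR μ a X n ⊆ X := by
    intro n
    have := hRmono 0 n (Nat.zero_le n)
    rwa [hR0] at this
  have hAX : ∀ n, dA μ a X n ⊆ X := by
    intro n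
    have := hcov 0 n
    rw [hA0, hR0, Set.empty_union] at this
    exact this
  -- the limit set
  set A : Set ℕ := ⋃ n, dA μ a X n with hAdef
  have hAsubX : A ⊆ X := Set.iUnion_subset hAX
  have hup : ∀ n, dA μ a X n ⊆ A := fun n => Set.subset_iUnion _ n
  have hcovA : ∀ n, A ⊆ dA μ a X n ∪ dR μ a X n := fun n => Set.iUnion_subset (hcov n)
  -- bound on pieces of the remainder class
  have hsmall : ∀ (S : Set ℕ) (n : ℕ), S ⊆ dR μ a X n → μ S ≤ 1 / (2 : ℝ) ^ n := by
    intro S n hS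
    have h2n : (0 : ℕ) < 2 ^ n := Nat.pow_pos (n := n) (by norm_num)
    have := apBound μ h2 h4 S (2 ^ n) (dr μ a X n) h2n
      (fun x hx => dmod μ a X n x (hS hx))
    push_cast at this
    exact this
  -- the key two-sided estimate
  have hkey : ∀ n, |μ A - a| ≤ 1 / (2 : ℝ) ^ n := by
    intro n
    have hAn := hup n
    have e1 : dA μ a X n ∪ (A \ dA μ a X n) = A := Set.union_diff_cancel hAn
    have hd1 : A \ dA μ a X n ⊆ dR μ a X n := by
      intro x hx
      rcases hcovA n hx.1 with h | h
      · exact absurd h hx.2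
      · exact h
    have hub : μ A ≤ a + 1 / (2 : ℝ) ^ n := by
      have := h3 (dA μ a X n) (A \ dA μ a X n)
      rw [e1] at this
      have h5 := hsmall _ n hd1
      have h6 := (hinv n).1
      linarith
    have hAcov := hcovA n
    have e2 : A ∪ ((dA μ a X n ∪ dR μ a X n) \ A) = dA μ a X n ∪ dR μ a X n :=
      Set.union_diff_cancel hAcov
    have hd2 : (dA μ a X n ∪ dR μ a X n) \ A ⊆ dR μ a X n := by
      intro x hx
      rcases hx.1 with h | h
      · exact absurd (hAn h) hx.2
      · exact h
    have hlb : a - 1 / (2 : ℝ) ^ n ≤ μ A := by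
      have := h3 A ((dA μ a X n ∪ dR μ a X n) \ A)
      rw [e2] at this
      have h5 := hsmall _ n hd2
      have h6 := (hinv n).2
      linarith
    rw [abs_le]
    constructor <;> linarith
  -- conclude
  refine ⟨A, hAsubX, ?_⟩
  by_contra hne
  have hpos : 0 < |μ A - a| := abs_pos.mpr (sub_ne_zero.mpr hne)
  obtain ⟨n, hn⟩ := exists_pow_lt_of_lt_one hpos (by norm_num : (1 / 2 : ℝ) < 1)
  have := hkey n
  rw [div_pow, one_pow] at hn
  linarith
end

section
/- Define f : 𝒫(ℕ) → ℝ by f(X) := 1/min(X ∩ ℕ⁺) if X ∩ ℕ⁺ ≠ ∅, and f(X) := 0 otherwise. Then f satisfies: f(ℕ) = 1; f is monotone; f(X ∪ Y) ≤ f(X) + f(Y) for all X, Y ⊆ ℕ; f(k·X) = (1/k)·f(X) for all X ⊆ ℕ and positive integers k; and the image of f equals {0} ∪ {1/k : k ∈ ℕ⁺}. -/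
/-- `f X = 1/min(X ∩ ℕ⁺)` if `X ∩ ℕ⁺ ≠ ∅`, and `0` otherwise (note that
`sInf ∅ = 0` in `ℕ` and `(0 : ℝ)⁻¹ = 0`). -/
noncomputable def minFun (X : Set ℕ) : ℝ := ((sInf {x | x ∈ X ∧ 0 < x} : ℕ) : ℝ)⁻¹

lemma minFun_nonneg (X : Set ℕ) : 0 ≤ minFun X := by
  unfold minFun; positivity

lemma minFun_empty_aux (X : Set ℕ) (h : {x | x ∈ X ∧ 0 < x} = ∅) : minFun X = 0 := by
  unfold minFun; rw [h, Nat.sInf_empty]; simp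

lemma minFun_mono (X Y : Set ℕ) (h : X ⊆ Y) : minFun X ≤ minFun Y := by
  rcases Set.eq_empty_or_nonempty {x | x ∈ X ∧ 0 < x} with he | hne
  · rw [minFun_empty_aux X he]; exact minFun_nonneg Y
  · have hmem : sInf {x | x ∈ X ∧ 0 < x} ∈ {x | x ∈ X ∧ 0 < x} := Nat.sInf_mem hne
    have hmemY : sInf {x | x ∈ X ∧ 0 < x} ∈ {x | x ∈ Y ∧ 0 < x} := ⟨h hmem.1, hmem.2⟩
    have hle : sInf {x | x ∈ Y ∧ 0 < x} ≤ sInf {x | x ∈ X ∧ 0 < x} := Nat.sInf_le hmemY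
    have hposY : 0 < sInf {x | x ∈ Y ∧ 0 < x} := (Nat.sInf_mem ⟨_, hmemY⟩).2
    unfold minFun
    apply inv_anti₀
    · exact_mod_cast hposY
    · exact_mod_cast hle

theorem stmt18 :
    minFun Set.univ = 1 ∧
    (∀ X Y : Set ℕ, X ⊆ Y → minFun X ≤ minFun Y) ∧
    (∀ X Y : Set ℕ, minFun (X ∪ Y) ≤ minFun X + minFun Y) ∧
    (∀ (X : Set ℕ) (k : ℕ), 0 < k →
      minFun ((fun x => k * x) '' X) = (1 / (k : ℝ)) * minFun X) ∧
    Set.range minFun = {0} ∪ {a : ℝ | ∃ k : ℕ, 0 < k ∧ a = 1 / (k : ℝ)} := by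
  refine ⟨?_, minFun_mono, ?_, ?_, ?_⟩
  · -- f(ℕ) = 1
    have h0 : {x : ℕ | x ∈ Set.univ ∧ 0 < x} = {x | 0 < x} := by ext x; simp
    unfold minFun
    rw [h0]
    have h1 : sInf {x : ℕ | 0 < x} = 1 := by
      have hm := Nat.sInf_mem (⟨1, by simp⟩ : {x : ℕ | 0 < x}.Nonempty)
      simp only [Set.mem_setOf_eq] at hm
      have h2 := Nat.sInf_le (show 1 ∈ {x : ℕ | 0 < x} by simp)
      omega
    rw [h1]; simp
  · -- subadditivity
    intro X Y
    rcases Set.eq_empty_or_nonempty {x | x ∈ X ∪ Y ∧ 0 < x} with he | hne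
    · rw [minFun_empty_aux _ he]
      exact add_nonneg (minFun_nonneg X) (minFun_nonneg Y)
    · have hmem := Nat.sInf_mem hne
      rcases hmem.1 with hX | hY
      · have hm : sInf {x | x ∈ X ∪ Y ∧ 0 < x} ∈ {x | x ∈ X ∧ 0 < x} := ⟨hX, hmem.2⟩
        have hposX : 0 < sInf {x | x ∈ X ∧ 0 < x} := (Nat.sInf_mem ⟨_, hm⟩).2
        have hle : sInf {x | x ∈ X ∧ 0 < x} ≤ sInf {x | x ∈ X ∪ Y ∧ 0 < x} :=
          Nat.sInf_le hm
        have : minFun (X ∪ Y) ≤ minFun X := by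
          unfold minFun
          apply inv_anti₀
          · exact_mod_cast hposX
          · exact_mod_cast hle
        linarith [minFun_nonneg Y]
      · have hm : sInf {x | x ∈ X ∪ Y ∧ 0 < x} ∈ {x | x ∈ Y ∧ 0 < x} := ⟨hY, hmem.2⟩
        have hposY : 0 < sInf {x | x ∈ Y ∧ 0 < x} := (Nat.sInf_mem ⟨_, hm⟩).2
        have hle : sInf {x | x ∈ Y ∧ 0 < x} ≤ sInf {x | x ∈ X ∪ Y ∧ 0 < x} :=
          Nat.sInf_le hm
        have : minFun (X ∪ Y) ≤ minFun Y := by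
          unfold minFun
          apply inv_anti₀
          · exact_mod_cast hposY
          · exact_mod_cast hle
        linarith [minFun_nonneg X]
  · -- dilation
    intro X k hk
    have hset : {x | x ∈ (fun x => k * x) '' X ∧ 0 < x}
        = (fun x => k * x) '' {x | x ∈ X ∧ 0 < x} := by
      ext x
      simp only [Set.mem_image, Set.mem_setOf_eq]
      constructor
      · rintro ⟨⟨y, hy, rfl⟩, hpos⟩
        refine ⟨y, ⟨hy, ?_⟩, rfl⟩
        rcases Nat.eq_zero_or_pos y with h | h
        · subst h; simp at hpos
        · exact h
      · rintro ⟨y, ⟨hy, hpos⟩, rfl⟩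
        exact ⟨⟨y, hy, rfl⟩, Nat.mul_pos hk hpos⟩
    rcases Set.eq_empty_or_nonempty {x | x ∈ X ∧ 0 < x} with he | hne
    · rw [minFun_empty_aux X he, minFun_empty_aux _ (by rw [hset, he]; simp), mul_zero]
    · have hinf : sInf {x | x ∈ (fun x => k * x) '' X ∧ 0 < x}
          = k * sInf {x | x ∈ X ∧ 0 < x} := by
        rw [hset]
        apply le_antisymm
        · exact Nat.sInf_le ⟨_, Nat.sInf_mem hne, rfl⟩
        · obtain ⟨y, hy, heq⟩ := Nat.sInf_mem (hne.image (fun x => k * x))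
          rw [← heq]
          exact Nat.mul_le_mul_left k (Nat.sInf_le hy)
      unfold minFun
      rw [hinf]
      push_cast
      rw [mul_inv, one_div]
  · -- range
    ext a
    simp only [Set.mem_range, Set.mem_union, Set.mem_singleton_iff, Set.mem_setOf_eq]
    constructor
    · rintro ⟨X, rfl⟩
      rcases Set.eq_empty_or_nonempty {x | x ∈ X ∧ 0 < x} with he | hne
      · exact Or.inl (minFun_empty_aux X he)
      · refine Or.inr ⟨sInf {x | x ∈ X ∧ 0 < x}, (Nat.sInf_mem hne).2, ?_⟩
        unfold minFun; rw [one_div]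
    · rintro (rfl | ⟨k, hk, rfl⟩)
      · exact ⟨∅, minFun_empty_aux ∅ (by ext x; simp)⟩
      · refine ⟨{k}, ?_⟩
        have hs : {x | x ∈ ({k} : Set ℕ) ∧ 0 < x} = {k} := by
          ext x
          simp only [Set.mem_singleton_iff, Set.mem_setOf_eq]
          constructor
          · rintro ⟨h, _⟩; exact h
          · rintro rfl; exact ⟨rfl, hk⟩
        unfold minFun
        rw [hs, csInf_singleton, one_div]
end
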